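/- Let S be a slice of an LBFS of a graph G, with initial vertex x. Then the neighbourhood of x inside S, N(x) ∩ S, is either empty or equal to the first maximal subslice of S (other than {x}). -/

import Mathlib

/-- The LBFS label of vertex `v` just before step `t`: for each earlier step `i < t`
(in increasing order of `i`) at which a neighbour of `v` was explored, the value `n - i`
is appended. -/
def lbfsLabel {V : Type*} (G : SimpleGraph V) [DecidableRel G.Adj] (σ : ℕ → V)
    (n t : ℕ) (v : V) : List ℕ :=
  ((List.range t).filter (fun i => decide (G.Adj (σ i) v))).map (fun i => n - i)

/-- `σ` (restricted to `[0,n)`) is a Lexicographic Breadth-First Search ordering of `G`: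
it enumerates all vertices, and at each step the chosen vertex has lexicographically
largest label among the unexplored vertices. -/
def IsLBFS {V : Type*} (G : SimpleGraph V) [DecidableRel G.Adj] (n : ℕ) (σ : ℕ → V) : Prop :=
  Set.BijOn σ (Set.Iio n) Set.univ ∧
    ∀ t < n, ∀ v : V, (∀ i < t, σ i ≠ v) →
      ¬ List.Lex (· < ·) (lbfsLabel G σ n t (σ t)) (lbfsLabel G σ n t v)

/-- The slice defined at step `t`: the unexplored vertices sharing the (lexicographically
largest) label of the chosen vertex `σ t` just before step `t`. -/
def sliceAt {V : Type*} (G : SimpleGraph V) [DecidableRel G.Adj] (σ : ℕ → V) (n t : ℕ) :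
    Set V :=
  {v | (∀ i < t, σ i ≠ v) ∧ lbfsLabel G σ n t v = lbfsLabel G σ n t (σ t)}

/-- `S` is a slice of the LBFS. -/
def IsSlice {V : Type*} (G : SimpleGraph V) [DecidableRel G.Adj] (σ : ℕ → V) (n : ℕ)
    (S : Set V) : Prop :=
  ∃ t < n, S = sliceAt G σ n t

/-- The slice defined at step `u` is a maximal (proper) subslice of the slice at step `t`. -/
def IsMaxSubsliceAt {V : Type*} (G : SimpleGraph V) [DecidableRel G.Adj] (σ : ℕ → V)
    (n t u : ℕ) : Prop :=
  u < n ∧ sliceAt G σ n u ⊂ sliceAt G σ n t ∧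
    ∀ w < n, ¬(sliceAt G σ n u ⊂ sliceAt G σ n w ∧ sliceAt G σ n w ⊂ sliceAt G σ n t)

/-- `u 1, …, u k` are the steps defining the maximal subslices `S_1, …, S_k` of the slice
at step `t`, listed in the order the LBFS defines them (the initial vertex `σ t`, as a
singleton, being by convention the zeroth maximal subslice). -/
def MaxSubsliceEnum {V : Type*} (G : SimpleGraph V) [DecidableRel G.Adj] (σ : ℕ → V)
    (n t k : ℕ) (u : ℕ → ℕ) : Prop :=
  (∀ i, 1 ≤ i → i ≤ k → IsMaxSubsliceAt G σ n t (u i)) ∧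
  (∀ i j, 1 ≤ i → i < j → j ≤ k → u i < u j) ∧
  (∀ i, 1 ≤ i → i ≤ k → t < u i) ∧
  (∀ w, w < n → IsMaxSubsliceAt G σ n t w →
    ∃ i, 1 ≤ i ∧ i ≤ k ∧ sliceAt G σ n w = sliceAt G σ n (u i))

/-- The edge `ab` is active for the slice at step `t`: both endpoints lie in that slice
but in different maximal subslices of it (i.e. no maximal subslice contains both). -/
def activeFor {V : Type*} (G : SimpleGraph V) [DecidableRel G.Adj] (σ : ℕ → V)
    (n t : ℕ) (a b : V) : Prop :=
  G.Adj a b ∧ a ∈ sliceAt G σ n t ∧ b ∈ sliceAt G σ n t ∧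
    ∀ w, IsMaxSubsliceAt G σ n t w → ¬(a ∈ sliceAt G σ n w ∧ b ∈ sliceAt G σ n w)
section Aux

private lemma lexAux_irrefl : ∀ (l : List ℕ), ¬ List.Lex (· < ·) l l
  | [], h => by cases h
  | a :: l, h => by
    cases h with
    | cons h => exact lexAux_irrefl l h
    | rel h => exact lt_irrefl _ h

private lemma lexAux_total : ∀ (l₁ l₂ : List ℕ),
    l₁ = l₂ ∨ List.Lex (· < ·) l₁ l₂ ∨ List.Lex (· < ·) l₂ l₁
  | [], [] => Or.inl rfl
  | [], _ :: _ => Or.inr (Or.inl List.Lex.nil)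
  | _ :: _, [] => Or.inr (Or.inr List.Lex.nil)
  | a :: as, b :: bs => by
    rcases lt_trichotomy a b with h | rfl | h
    · exact Or.inr (Or.inl (List.Lex.rel h))
    · rcases lexAux_total as bs with h | h | h
      · exact Or.inl (by rw [h])
      · exact Or.inr (Or.inl (List.Lex.cons h))
      · exact Or.inr (Or.inr (List.Lex.cons h))
    · exact Or.inr (Or.inr (List.Lex.rel h))

private lemma lexAux_append_self (l : List ℕ) (x : ℕ) (xs : List ℕ) :
    List.Lex (· < ·) l (l ++ x :: xs) := by
  induction l with
  | nil => exact List.Lex.nil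
  | cons a t ih => exact List.Lex.cons ih

private lemma lexAux_append_left {a b : List ℕ} (h : List.Lex (· < ·) a b) (l : List ℕ) :
    List.Lex (· < ·) (l ++ a) (l ++ b) := by
  induction l with
  | nil => exact h
  | cons x t ih => exact List.Lex.cons ih

private lemma lexAux_append {l₁ l₂ : List ℕ} (h : List.Lex (· < ·) l₁ l₂) :
    ∀ e₁ e₂ : List ℕ, (∀ x ∈ e₁, ∀ y ∈ l₂, x < y) →
      List.Lex (· < ·) (l₁ ++ e₁) (l₂ ++ e₂) := by
  induction h with
  | nil =>
    intro e₁ e₂ he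
    cases e₁ with
    | nil => exact List.Lex.nil
    | cons x xs => exact List.Lex.rel (he x (by simp) _ (by simp))
  | @rel a as b bs hab => intro e₁ e₂ he; exact List.Lex.rel hab
  | @cons a as bs h ih =>
    intro e₁ e₂ he
    exact List.Lex.cons (ih e₁ e₂ fun x hx y hy => he x hx y (List.mem_cons_of_mem _ hy))

private lemma filterAux_pointwise {p q : ℕ → Bool} :
    ∀ {l : List ℕ}, l.Nodup → l.filter p = l.filter q → ∀ x ∈ l, p x = q x
  | [], _, _, x, hx => by simp at hx
  | a :: l, hnd, h, x, hx => by
    have hal : a ∉ l := (List.nodup_cons.1 hnd).1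
    have hnd' : l.Nodup := (List.nodup_cons.1 hnd).2
    have key : p a = q a ∧ List.filter p l = List.filter q l := by
      by_cases hp : p a <;> by_cases hq : q a
      · rw [List.filter_cons_of_pos hp, List.filter_cons_of_pos hq] at h
        refine ⟨by rw [hp, hq], ?_⟩
        injection h
      · rw [List.filter_cons_of_pos hp, List.filter_cons_of_neg (by simp [hq])] at h
        exact absurd (List.mem_of_mem_filter (show a ∈ List.filter q l by rw [← h]; simp)) hal
      · rw [List.filter_cons_of_neg (by simp [hp]), List.filter_cons_of_pos hq] at h
        exact absurd (List.mem_of_mem_filter (show a ∈ List.filter p l by rw [h]; simp)) hal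
      · rw [List.filter_cons_of_neg (by simp [hp]), List.filter_cons_of_neg (by simp [hq])] at h
        exact ⟨by simp [hp, hq], h⟩
    rcases List.mem_cons.1 hx with rfl | hx'
    · exact key.1
    · exact filterAux_pointwise hnd' key.2 x hx'

private lemma mapSubAux_inj {n : ℕ} :
    ∀ {l₁ l₂ : List ℕ}, (∀ x ∈ l₁, x < n) → (∀ x ∈ l₂, x < n) →
      l₁.map (fun i => n - i) = l₂.map (fun i => n - i) → l₁ = l₂
  | [], [], _, _, _ => rfl
  | [], b :: bs, _, _, h => by simp at h
  | a :: as, [], _, _, h => by simp at h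
  | a :: as, b :: bs, h₁, h₂, h => by
    simp only [List.map_cons, List.cons.injEq] at h
    have ha : a < n := h₁ a (by simp)
    have hb : b < n := h₂ b (by simp)
    have : a = b := by omega
    subst this
    rw [mapSubAux_inj (fun x hx => h₁ x (by simp [hx])) (fun x hx => h₂ x (by simp [hx])) h.2]

variable {V : Type*} (G : SimpleGraph V) [DecidableRel G.Adj] (σ : ℕ → V) (n : ℕ)

private lemma lbl_mem {t : ℕ} {v : V} {x : ℕ} (hx : x ∈ lbfsLabel G σ n t v) :
    ∃ i, i < t ∧ x = n - i := by
  simp only [lbfsLabel, List.mem_map, List.mem_filter, List.mem_range] at hx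
  obtain ⟨i, ⟨hi, -⟩, rfl⟩ := hx
  exact ⟨i, hi, rfl⟩

private lemma lbl_succ (t : ℕ) (v : V) :
    lbfsLabel G σ n (t + 1) v =
      lbfsLabel G σ n t v ++ if G.Adj (σ t) v then [n - t] else [] := by
  unfold lbfsLabel
  rw [List.range_succ, List.filter_append, List.map_append]
  congr 1
  by_cases h : G.Adj (σ t) v <;> simp [h]

private lemma lbl_eq_iff {t : ℕ} (htn : t ≤ n) (v w : V) :
    lbfsLabel G σ n t v = lbfsLabel G σ n t w ↔
      ∀ i < t, (G.Adj (σ i) v ↔ G.Adj (σ i) w) := by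
  constructor
  · intro h i hi
    have hmem : ∀ (z : V) (x : ℕ),
        x ∈ (List.range t).filter (fun i => decide (G.Adj (σ i) z)) → x < n := by
      intro z x hx
      have := List.mem_range.1 (List.mem_of_mem_filter hx)
      omega
    have h2 := mapSubAux_inj (hmem v) (hmem w) h
    have h3 := filterAux_pointwise (List.nodup_range : (List.range t).Nodup) h2 i (List.mem_range.2 hi)
    simpa using h3
  · intro h
    unfold lbfsLabel
    congr 1
    apply List.filter_congr
    intro i hi
    exact decide_eq_decide.2 (h i (List.mem_range.1 hi))

private lemma lbl_eq_mono {w t : ℕ} (hwt : w ≤ t) (htn : t ≤ n) {v v' : V}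
    (h : lbfsLabel G σ n t v = lbfsLabel G σ n t v') :
    lbfsLabel G σ n w v = lbfsLabel G σ n w v' := by
  rw [lbl_eq_iff G σ n (le_trans hwt htn)]
  intro i hi
  exact (lbl_eq_iff G σ n htn v v').1 h i (lt_of_lt_of_le hi hwt)

private lemma lbl_decomp {w t : ℕ} (hwt : w ≤ t) (v : V) :
    ∃ R : List ℕ, lbfsLabel G σ n t v = lbfsLabel G σ n w v ++ R ∧
      ∀ x ∈ R, x ≤ n - w := by
  obtain ⟨d, rfl⟩ := Nat.exists_eq_add_of_le hwt
  refine ⟨(((List.range d).map (fun j => w + j)).filter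
      (fun i => decide (G.Adj (σ i) v))).map (fun i => n - i), ?_, ?_⟩
  · unfold lbfsLabel
    rw [List.range_add, List.filter_append, List.map_append]
  · intro x hx
    simp only [List.mem_map, List.mem_filter, List.mem_map, List.mem_range] at hx
    obtain ⟨i, ⟨⟨j, hj, rfl⟩, -⟩, rfl⟩ := hx
    omega

private lemma mem_slice_self {t : ℕ} (htn : t < n) (hinj : Set.InjOn σ (Set.Iio n)) :
    σ t ∈ sliceAt G σ n t := by
  refine ⟨fun i hi hne => ?_, rfl⟩
  have : i = t := hinj (by exact lt_trans hi htn) htn hne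
  omega

private lemma unexplored_lt {t : ℕ} (hbij : Set.BijOn σ (Set.Iio n) Set.univ) {v : V}
    (hv : ∀ i < t, σ i ≠ v) : t < n := by
  obtain ⟨i, hi, rfl⟩ := hbij.surjOn (Set.mem_univ v)
  simp only [Set.mem_Iio] at hi
  have : t ≤ i := le_of_not_gt fun h => hv i h rfl
  omega

private lemma slice_subset {w w' : ℕ} (hww' : w ≤ w') (hw'n : w' ≤ n) {v : V}
    (hvw : v ∈ sliceAt G σ n w) (hvw' : v ∈ sliceAt G σ n w') :
    sliceAt G σ n w' ⊆ sliceAt G σ n w := by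
  intro z hz
  refine ⟨fun i hi => hz.1 i (lt_of_lt_of_le hi hww'), ?_⟩
  have h1 : lbfsLabel G σ n w' z = lbfsLabel G σ n w' v := hz.2.trans hvw'.2.symm
  have h2 := lbl_eq_mono G σ n hww' hw'n h1
  exact h2.trans hvw.2

end Aux

/-- for a slice `S` with initial vertex `x`, the set `N(x) ∩ S` is empty
or equals the first maximal subslice of `S` other than `{x}`. -/
theorem initial_vertex_neighbourhood {V : Type*} (G : SimpleGraph V) [DecidableRel G.Adj]
    (n : ℕ) (σ : ℕ → V) (hL : IsLBFS G n σ) (t : ℕ) (ht : t < n)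
    (k : ℕ) (u : ℕ → ℕ) (hu : MaxSubsliceEnum G σ n t k u) :
    G.neighborSet (σ t) ∩ sliceAt G σ n t = ∅ ∨
      (1 ≤ k ∧ G.neighborSet (σ t) ∩ sliceAt G σ n t = sliceAt G σ n (u 1)) := by
  classical
  by_cases hAe : G.neighborSet (σ t) ∩ sliceAt G σ n t = ∅
  · exact Or.inl hAe
  right
  obtain ⟨a0, ha0⟩ := Set.nonempty_iff_ne_empty.2 hAe
  have hbij := hL.1
  have hinj : Set.InjOn σ (Set.Iio n) := hL.1.injOn
  have hAunexp : ∀ a, a ∈ G.neighborSet (σ t) ∩ sliceAt G σ n t → ∀ i < t + 1, σ i ≠ a := by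
    intro a ha i hi
    rcases Nat.lt_succ_iff_lt_or_eq.1 hi with h | rfl
    · exact ha.2.1 i h
    · exact fun he => G.loopless.irrefl _ (he ▸ ha.1)
  have ht1n : t + 1 < n := unexplored_lt σ n hbij (hAunexp a0 ha0)
  have hlblA : ∀ a, a ∈ G.neighborSet (σ t) ∩ sliceAt G σ n t →
      lbfsLabel G σ n (t + 1) a = lbfsLabel G σ n t (σ t) ++ [n - t] := by
    intro a ha
    rw [lbl_succ, ha.2.2, if_pos (show G.Adj (σ t) a from ha.1)]
  have hcmp : ∀ z, (∀ i < t + 1, σ i ≠ z) → z ∉ G.neighborSet (σ t) ∩ sliceAt G σ n t →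
      List.Lex (· < ·) (lbfsLabel G σ n (t + 1) z) (lbfsLabel G σ n t (σ t) ++ [n - t]) := by
    intro z hz hznA
    by_cases hzS : z ∈ sliceAt G σ n t
    · have hnadj : ¬ G.Adj (σ t) z := fun h => hznA ⟨h, hzS⟩
      rw [lbl_succ, if_neg hnadj, List.append_nil, hzS.2]
      exact lexAux_append_self _ _ []
    · have hzt : ∀ i < t, σ i ≠ z := fun i hi => hz i (by omega)
      have hlt : List.Lex (· < ·) (lbfsLabel G σ n t z) (lbfsLabel G σ n t (σ t)) := by
        have hne : lbfsLabel G σ n t z ≠ lbfsLabel G σ n t (σ t) := fun h => hzS ⟨hzt, h⟩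
        have hnot := hL.2 t ht z hzt
        rcases lexAux_total (lbfsLabel G σ n t z) (lbfsLabel G σ n t (σ t)) with h | h | h
        · exact absurd h hne
        · exact h
        · exact absurd h hnot
      rw [lbl_succ]
      apply lexAux_append hlt
      intro x hx y hy
      obtain ⟨i, hi, rfl⟩ := lbl_mem G σ n hy
      have hxval : x = n - t := by
        by_cases hadj : G.Adj (σ t) z <;> simp [hadj] at hx
        omega
      omega
  have hs1un : ∀ i < t + 1, σ i ≠ σ (t + 1) := by
    intro i hi he
    have := hinj (show i ∈ Set.Iio n by simp only [Set.mem_Iio]; omega)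
      (show t + 1 ∈ Set.Iio n by simpa using ht1n) he
    omega
  have hs1 : σ (t + 1) ∈ G.neighborSet (σ t) ∩ sliceAt G σ n t := by
    by_contra h
    exact hL.2 (t + 1) ht1n a0 (hAunexp a0 ha0)
      (by rw [hlblA a0 ha0]; exact hcmp _ hs1un h)
  have hsliceEq : sliceAt G σ n (t + 1) = G.neighborSet (σ t) ∩ sliceAt G σ n t := by
    ext z
    constructor
    · intro hz
      by_contra hznA
      have h1 := hcmp z hz.1 hznA
      rw [hz.2, hlblA _ hs1] at h1
      exact lexAux_irrefl _ h1
    · intro hz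
      exact ⟨hAunexp z hz, (hlblA z hz).trans (hlblA _ hs1).symm⟩
  have hAss : G.neighborSet (σ t) ∩ sliceAt G σ n t ⊂ sliceAt G σ n t := by
    rw [Set.ssubset_iff_subset_ne]
    refine ⟨Set.inter_subset_right, fun h => ?_⟩
    have hmem := mem_slice_self G σ n ht hinj
    rw [← h] at hmem
    exact G.loopless.irrefl _ hmem.1
  have hmaxsub : IsMaxSubsliceAt G σ n t (t + 1) := by
    refine ⟨ht1n, by rw [hsliceEq]; exact hAss, ?_⟩
    intro w hw hcontra
    obtain ⟨h1, h2⟩ := hcontra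
    have hst1 : σ (t + 1) ∈ sliceAt G σ n (t + 1) := mem_slice_self G σ n ht1n hinj
    have hstw : σ (t + 1) ∈ sliceAt G σ n w := h1.subset hst1
    rcases lt_trichotomy w (t + 1) with hlt | heq | hgt
    · have hstS : σ (t + 1) ∈ sliceAt G σ n t := hs1.2
      have := slice_subset G σ n (show w ≤ t by omega) (le_of_lt ht) hstw hstS
      exact h2.not_subset this
    · rw [heq] at h1; exact h1.ne rfl
    · have := slice_subset G σ n (le_of_lt hgt) (le_of_lt hw) hst1 hstw
      exact h1.not_subset this
  obtain ⟨i, hi1, hik, hieq⟩ := hu.2.2.2 (t + 1) ht1n hmaxsub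
  refine ⟨le_trans hi1 hik, ?_⟩
  have hmu1 := hu.1 1 le_rfl (le_trans hi1 hik)
  have htu1 : t < u 1 := hu.2.2.1 1 le_rfl (le_trans hi1 hik)
  have hu1n : u 1 < n := hmu1.1
  rcases eq_or_lt_of_le (show t + 1 ≤ u 1 from htu1) with heq | hlt
  · rw [← heq]
    exact hsliceEq.symm
  · by_cases hdisj : (sliceAt G σ n (u 1) ∩ sliceAt G σ n (t + 1)).Nonempty
    · obtain ⟨v, hv1, hv2⟩ := hdisj
      have hsub := slice_subset G σ n (le_of_lt hlt) (le_of_lt hu1n) hv2 hv1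
      rcases eq_or_ne (sliceAt G σ n (u 1)) (sliceAt G σ n (t + 1)) with he | hne
      · rw [he]
        exact hsliceEq.symm
      · exact absurd ⟨Set.ssubset_iff_subset_ne.2 ⟨hsub, hne⟩, by rw [hsliceEq]; exact hAss⟩
          (hmu1.2.2 (t + 1) ht1n)
    · rw [Set.not_nonempty_iff_eq_empty] at hdisj
      exfalso
      have hi2 : 1 < i := by
        rcases Nat.lt_or_ge 1 i with h | h
        · exact h
        · exfalso
          have hie : i = 1 := by omega
          rw [hie] at hieq
          have hmm : σ (t + 1) ∈ sliceAt G σ n (u 1) ∩ sliceAt G σ n (t + 1) :=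
            ⟨hieq ▸ mem_slice_self G σ n ht1n hinj, mem_slice_self G σ n ht1n hinj⟩
          rw [hdisj] at hmm
          exact hmm
      have huilt : u 1 < u i := hu.2.1 1 i le_rfl hi2 hik
      have huin : u i < n := (hu.1 i (by omega) hik).1
      have hamem : σ (u i) ∈ sliceAt G σ n (u i) := mem_slice_self G σ n huin hinj
      have haA : σ (u i) ∈ sliceAt G σ n (t + 1) := by rw [hieq]; exact hamem
      have haA' : σ (u i) ∈ G.neighborSet (σ t) ∩ sliceAt G σ n t := by
        rwa [hsliceEq] at haA
      have haunexp : ∀ j < u 1, σ j ≠ σ (u i) := fun j hj => hamem.1 j (lt_trans hj huilt)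
      have hx1 : σ (u 1) ∈ sliceAt G σ n (u 1) := mem_slice_self G σ n hu1n hinj
      have hx1S : σ (u 1) ∈ sliceAt G σ n t := hmu1.2.1.subset hx1
      have hx1nadj : ¬ G.Adj (σ t) (σ (u 1)) := by
        intro hadj
        have hmm : σ (u 1) ∈ sliceAt G σ n (u 1) ∩ sliceAt G σ n (t + 1) :=
          ⟨hx1, by rw [hsliceEq]; exact ⟨hadj, hx1S⟩⟩
        rw [hdisj] at hmm
        exact hmm
      have hlx1 : lbfsLabel G σ n (t + 1) (σ (u 1)) = lbfsLabel G σ n t (σ t) := by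
        rw [lbl_succ, if_neg hx1nadj, List.append_nil]
        exact hx1S.2
      obtain ⟨R1, hR1, hR1b⟩ := lbl_decomp G σ n (le_of_lt hlt) (σ (u 1))
      obtain ⟨R2, hR2, hR2b⟩ := lbl_decomp G σ n (le_of_lt hlt) (σ (u i))
      have hlex : List.Lex (· < ·) (lbfsLabel G σ n (u 1) (σ (u 1)))
          (lbfsLabel G σ n (u 1) (σ (u i))) := by
        rw [hR1, hR2, hlx1, hlblA _ haA', List.append_assoc, List.singleton_append]
        apply lexAux_append_left
        cases R1 with
        | nil => exact List.Lex.nil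
        | cons x xs =>
          refine List.Lex.rel ?_
          have := hR1b x (List.mem_cons_self : x ∈ x :: xs)
          omega
      exact hL.2 (u 1) hu1n (σ (u i)) haunexp hlex
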